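/- Let Δ be an abstract simplicial complex on a finite vertex set whose Stanley–Reisner ideal is generated by k+1 pairwise-disjoint squarefree monomials D_0, D_1, ..., D_k (i.e., the facets of Δ are exactly the complements of sets {v_0,...,v_k} with v_i ∈ D_i). Then Δ is shellable: ordering facets lexicographically via any fixed total orders on each D_i yields a shelling. -/

import Mathlib

private structure StmtChoice {S : Type*} {k : ℕ} (D : Fin (k + 1) → Finset S) where
  fn : Fin (k + 1) → S
  mem : ∀ i, fn i ∈ D i

private lemma StmtChoice.fn_injective {S : Type*} {k : ℕ} {D : Fin (k + 1) → Finset S} :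
    Function.Injective (fun v : StmtChoice D => v.fn) := by
  rintro ⟨a, ha⟩ ⟨b, hb⟩ h
  simpa using h

noncomputable instance stmtChoiceLinearOrder {S : Type*} [LinearOrder S] {k : ℕ}
    (D : Fin (k + 1) → Finset S) : LinearOrder (StmtChoice D) :=
  letI LexLO : LinearOrder (Lex (Fin (k + 1) → S)) :=
    @Pi.Lex.linearOrder (Fin (k + 1)) (fun _ => S)
      inferInstance (inferInstance : WellFoundedLT (Fin (k + 1))) (fun _ => inferInstance)
  LinearOrder.lift' (β := Lex (Fin (k + 1) → S)) (fun v => toLex v.fn)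
    (fun a b h => StmtChoice.fn_injective (toLex.injective h))

private lemma StmtChoice.lt_iff {S : Type*} [LinearOrder S] {k : ℕ}
    {D : Fin (k + 1) → Finset S} (a b : StmtChoice D) :
    a < b ↔ ∃ m, (∀ l, l < m → a.fn l = b.fn l) ∧ a.fn m < b.fn m :=
  Iff.rfl

noncomputable instance stmtChoiceFintype {S : Type*} [Fintype S] {k : ℕ}
    (D : Fin (k + 1) → Finset S) : Fintype (StmtChoice D) := by
  classical
  exact Fintype.ofInjective (fun v : StmtChoice D => v.fn) StmtChoice.fn_injective

private lemma aux_mem_img {S : Type*} [Fintype S] [DecidableEq S] {k : ℕ}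
    {D : Fin (k + 1) → Finset S}
    (hdisj : ∀ i j, i ≠ j → Disjoint (D i) (D j))
    {v : Fin (k + 1) → S} (hv : ∀ i, v i ∈ D i) (i : Fin (k + 1)) {x : S}
    (hx : x ∈ Finset.image v Finset.univ) (hxD : x ∈ D i) :
    x = v i := by
  simp only [Finset.mem_image, Finset.mem_univ, true_and] at hx
  obtain ⟨j, rfl⟩ := hx
  rcases eq_or_ne j i with rfl | h
  · rfl
  · exact absurd hxD (Finset.disjoint_left.mp (hdisj j i h) (hv j))

private theorem stmt_11_aux {S : Type*} [Fintype S] [DecidableEq S] [LinearOrder S] (k : ℕ)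
    (D : Fin (k + 1) → Finset S)
    (hne : ∀ i, (D i).Nonempty)
    (hdisj : ∀ i j, i ≠ j → Disjoint (D i) (D j)) :
    ∃ L : List (Finset S),
      L.Nodup ∧
      (∀ F : Finset S, F ∈ L ↔
        ((∀ i, ¬ D i ⊆ F) ∧ ∀ G : Finset S, (∀ i, ¬ D i ⊆ G) → F ⊆ G → F = G)) ∧
      (∀ F ∈ L, ∀ G ∈ L, F.card = G.card) ∧
      (∀ i j : ℕ, ∀ hij : i < j, ∀ hj : j < L.length,
        ∃ v ∈ L.get ⟨j, hj⟩ \ L.get ⟨i, lt_trans hij hj⟩,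
          ∃ t : ℕ, ∃ ht : t < j, L.get ⟨j, hj⟩ \ L.get ⟨t, lt_trans ht hj⟩ = {v}) := by
  classical
  let img : StmtChoice D → Finset S := fun v => Finset.image v.fn Finset.univ
  let f : StmtChoice D → Finset S := fun v => Finset.univ \ img v
  have hkey : ∀ (v : StmtChoice D) (i : Fin (k + 1)) {x : S},
      x ∈ img v → x ∈ D i → x = v.fn i :=
    fun v i x hx hxD => aux_mem_img hdisj v.mem i hx hxD
  have hmemf : ∀ (v : StmtChoice D) (x : S), x ∈ f v ↔ x ∉ img v := by
    intro v x; simp [f]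
  have himgmem : ∀ (v : StmtChoice D) (i : Fin (k + 1)), v.fn i ∈ img v :=
    fun v i => Finset.mem_image_of_mem _ (Finset.mem_univ i)
  have hfsub : ∀ (v : StmtChoice D) (i : Fin (k + 1)), ¬ D i ⊆ f v := by
    intro v i hsub
    exact ((hmemf v _).mp (hsub (v.mem i))) (himgmem v i)
  have hmax : ∀ (v : StmtChoice D) (G : Finset S), (∀ i, ¬ D i ⊆ G) → f v ⊆ G → f v = G := by
    intro v G hG hsub
    refine Finset.Subset.antisymm hsub fun x hxG => ?_
    by_contra hxf
    rw [hmemf] at hxf; push_neg at hxf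
    simp only [img, Finset.mem_image, Finset.mem_univ, true_and] at hxf
    obtain ⟨i, rfl⟩ := hxf
    refine hG i fun y hy => ?_
    rcases eq_or_ne y (v.fn i) with rfl | hney
    · exact hxG
    · exact hsub ((hmemf v y).mpr fun hy' => hney (hkey v i hy' hy))
  have himgc : ∀ v, img v = Finset.univ \ f v := by
    intro v; simp [f, Finset.sdiff_sdiff_self_left]
  have hinj : Function.Injective f := by
    intro v w h
    have himg : img v = img w := by rw [himgc v, himgc w, h]
    exact StmtChoice.fn_injective (funext fun i =>
      hkey w i (himg ▸ himgmem v i) (v.mem i))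
  have hcard : ∀ v, (f v).card = Fintype.card S - (k + 1) := by
    intro v
    have hinjv : Function.Injective v.fn := by
      intro i j hij
      by_contra hnij
      refine Finset.disjoint_left.mp (hdisj i j hnij) (v.mem i) ?_
      rw [hij]; exact v.mem j
    rw [Finset.card_sdiff_of_subset (Finset.subset_univ _), Finset.card_univ,
      Finset.card_image_of_injective _ hinjv, Finset.card_univ, Fintype.card_fin]
  let vs : List (StmtChoice D) := Finset.sort Finset.univ (· ≤ ·)
  have hvsmem : ∀ v, v ∈ vs :=
    fun v => (Finset.mem_sort (α := StmtChoice D) (· ≤ ·)).mpr (Finset.mem_univ v)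
  have hvsnodup : vs.Nodup := Finset.sort_nodup (α := StmtChoice D) Finset.univ (· ≤ ·)
  have hsorted : vs.Pairwise (· < ·) :=
    ((Finset.pairwise_sort _ _).and hvsnodup).imp fun h => lt_of_le_of_ne h.1 h.2
  refine ⟨vs.map f, hvsnodup.map hinj, ?_, ?_, ?_⟩
  · intro F
    constructor
    · intro hF
      obtain ⟨v, -, rfl⟩ := List.mem_map.mp hF
      exact ⟨hfsub v, hmax v⟩
    · rintro ⟨h1, h2⟩
      have hx : ∀ i, ∃ x, x ∈ D i ∧ x ∉ F := by
        intro i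
        by_contra h; push_neg at h
        exact h1 i fun y hy => h y hy
      choose g hg1 hg2 using hx
      have hsub : F ⊆ f ⟨g, hg1⟩ := by
        intro x hxF
        refine (hmemf _ x).mpr fun hx' => ?_
        simp only [img, Finset.mem_image, Finset.mem_univ, true_and] at hx'
        obtain ⟨i, rfl⟩ := hx'
        exact hg2 i hxF
      exact List.mem_map.mpr ⟨_, hvsmem _, (h2 _ (hfsub _) hsub).symm⟩
  · intro F hF G hG
    obtain ⟨v, -, rfl⟩ := List.mem_map.mp hF
    obtain ⟨w, -, rfl⟩ := List.mem_map.mp hG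
    rw [hcard v, hcard w]
  · intro i j hij hj
    have hlen : (vs.map f).length = vs.length := List.length_map _
    have hj' : j < vs.length := hlen ▸ hj
    have hi' : i < vs.length := lt_trans hij hj'
    have hget : ∀ (t : ℕ) (ht : t < vs.length) (ht2 : t < (vs.map f).length),
        (vs.map f).get ⟨t, ht2⟩ = f (vs.get ⟨t, ht⟩) := by
      intro t ht ht2
      simp [List.get_eq_getElem, List.getElem_map]
    have hvw : vs.get ⟨i, hi'⟩ < vs.get ⟨j, hj'⟩ :=
      hsorted.rel_get_of_lt (show (⟨i, hi'⟩ : Fin vs.length) < ⟨j, hj'⟩ from hij)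
    set v := vs.get ⟨i, hi'⟩ with hv
    set w := vs.get ⟨j, hj'⟩ with hw
    obtain ⟨m, hagree, hm⟩ := (StmtChoice.lt_iff v w).mp hvw
    have hneS : v.fn m ≠ w.fn m := ne_of_lt hm
    have hunot : v.fn m ∉ img w := fun h => hneS (hkey w m h (v.mem m))
    refine ⟨v.fn m, ?_, ?_⟩
    · rw [hget j hj' hj, hget i hi' (lt_trans hij hj), ← hv, ← hw]
      exact Finset.mem_sdiff.mpr ⟨(hmemf w _).mpr hunot,
        fun h => (hmemf v _).mp h (himgmem v m)⟩
    · have hv'2 : ∀ l, Function.update w.fn m (v.fn m) l ∈ D l := by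
        intro l
        rcases eq_or_ne l m with rfl | hl
        · rw [Function.update_self]; exact v.mem l
        · rw [Function.update_of_ne hl]; exact w.mem l
      set v' : StmtChoice D := ⟨Function.update w.fn m (v.fn m), hv'2⟩ with hv'def
      have hv'm : v'.fn m = v.fn m := Function.update_self _ _ _
      have hv'ne : ∀ l, l ≠ m → v'.fn l = w.fn l :=
        fun l hl => Function.update_of_ne hl _ _
      have hv'w : v' < w := (StmtChoice.lt_iff v' w).mpr
        ⟨m, fun l hl => hv'ne l (ne_of_lt hl), by rw [hv'm]; exact hm⟩
      have hne' : v' ≠ w := by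
        intro h
        apply hneS
        rw [← hv'm, h]
      have ht' : vs.idxOf v' < vs.length := List.idxOf_lt_length_iff.mpr (hvsmem v')
      have hgt : vs.get ⟨vs.idxOf v', ht'⟩ = v' := List.idxOf_get ht'
      have htj : vs.idxOf v' < j := by
        rcases lt_trichotomy (vs.idxOf v') j with h | h | h
        · exact h
        · exact absurd (by rw [← hgt, hw]; congr 1; exact Fin.ext h) hne'
        · exact absurd (hsorted.rel_get_of_lt
            (show (⟨j, hj'⟩ : Fin vs.length) < ⟨vs.idxOf v', ht'⟩ from h))
            (by rw [hgt, ← hw]; exact lt_asymm hv'w)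
      refine ⟨vs.idxOf v', htj, ?_⟩
      rw [hget j hj' hj, hget _ ht' (lt_trans htj hj), hgt, ← hw]
      ext x
      simp only [Finset.mem_sdiff, hmemf, Finset.mem_singleton, not_not]
      constructor
      · rintro ⟨hxw, hxv'⟩
        by_contra hne0
        simp only [img, Finset.mem_image, Finset.mem_univ, true_and] at hxv'
        obtain ⟨l, rfl⟩ := hxv'
        rcases eq_or_ne l m with rfl | hl
        · exact hne0 hv'm
        · refine hxw ?_
          have h9 := himgmem w l
          rwa [← Function.update_of_ne hl (v.fn m) w.fn] at h9
      · rintro rfl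
        refine ⟨hunot, ?_⟩
        have h9 := himgmem v' m
        rwa [show v'.fn m = v.fn m from hv'm] at h9

theorem stmt_11 {S : Type*} [Fintype S] [DecidableEq S] (k : ℕ)
    (D : Fin (k + 1) → Finset S)
    (hne : ∀ i, (D i).Nonempty)
    (hdisj : ∀ i j, i ≠ j → Disjoint (D i) (D j)) :
    ∃ L : List (Finset S),
      L.Nodup ∧
      -- `L` enumerates exactly the facets (maximal faces) of the complex
      -- whose faces are the sets containing no `D i`
      (∀ F : Finset S, F ∈ L ↔
        ((∀ i, ¬ D i ⊆ F) ∧ ∀ G : Finset S, (∀ i, ¬ D i ⊆ G) → F ⊆ G → F = G)) ∧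
      -- all facets have the same dimension
      (∀ F ∈ L, ∀ G ∈ L, F.card = G.card) ∧
      -- the shelling condition
      (∀ i j : ℕ, ∀ hij : i < j, ∀ hj : j < L.length,
        ∃ v ∈ L.get ⟨j, hj⟩ \ L.get ⟨i, lt_trans hij hj⟩,
          ∃ t : ℕ, ∃ ht : t < j, L.get ⟨j, hj⟩ \ L.get ⟨t, lt_trans ht hj⟩ = {v}) := by
  letI : LinearOrder S := LinearOrder.lift' (Fintype.equivFin S) (Fintype.equivFin S).injective
  exact stmt_11_aux k D hne hdisj
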